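/- Every Pareto optimal matching is a greedy matching: if τ is a Pareto optimal matching, then there exists a linear ordering π of the applicants such that τ equals the greedy matching induced by π. -/

import Mathlib

/-- `S` is a blocking coalition of the matching `τ`. -/
def IsBlocking {A B : Type*} (pref : A → B → B → Prop) (τ : A → B) (S : Set A) : Prop :=
  S.Nonempty ∧ ∃ τ' : A → B, Function.Injective τ' ∧
    (∀ a ∉ S, τ' a = τ a) ∧ ∀ a ∈ S, pref a (τ' a) (τ a)

/-- `τ` is a Pareto optimal matching. -/
def IsPOM {A B : Type*} (pref : A → B → B → Prop) (τ : A → B) : Prop :=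
  Function.Injective τ ∧ ∀ S : Set A, ¬ IsBlocking pref τ S

/-- `τ` is the greedy matching obtained by processing the applicants in the
order `π`. -/
def IsGreedy {A B : Type*} [Fintype A] (pref : A → B → B → Prop)
    (π : Fin (Fintype.card A) ≃ A) (τ : A → B) : Prop :=
  ∀ i : Fin (Fintype.card A), ∀ b : B,
    b ≠ τ (π i) → (∀ j, j < i → b ≠ τ (π j)) → pref (π i) (τ (π i)) b

open Classical in
lemma key {A B : Type*} [Fintype A] [Fintype B]
    (pref : A → B → B → Prop) (hpref : ∀ a, IsStrictTotalOrder B (pref a))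
    (τ : A → B) (hτ : IsPOM pref τ) (S : Finset A) (hS : S.Nonempty) :
    ∃ a ∈ S, ∀ b : B, (∀ a' ∉ S, b ≠ τ a') → b ≠ τ a → pref a (τ a) b := by
  by_contra h
  push_neg at h
  obtain ⟨hinj, hpo⟩ := hτ
  -- choose improvement houses
  have h' : ∀ a : A, a ∈ S → ∃ b : B, (∀ a' ∉ S, b ≠ τ a') ∧ b ≠ τ a ∧ pref a b (τ a) := by
    intro a ha
    obtain ⟨b, hb1, hb2, hb3⟩ := h a ha
    refine ⟨b, hb1, hb2, ?_⟩
    rcases (by have := (hpref a).trichotomous (τ a) b; tauto : pref a (τ a) b ∨ τ a = b ∨ pref a b (τ a)) with h1 | h1 | h1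
    · exact absurd h1 hb3
    · exact absurd h1.symm hb2
    · exact h1
  classical
  set F : A → B := fun a => if ha : a ∈ S then (h' a ha).choose else τ a with hF
  have hF1 : ∀ a ∈ S, ∀ a' ∉ S, F a ≠ τ a' := by
    intro a ha; simp only [hF, dif_pos ha]; exact (h' a ha).choose_spec.1
  have hF2 : ∀ a ∈ S, F a ≠ τ a := by
    intro a ha; simp only [hF, dif_pos ha]; exact (h' a ha).choose_spec.2.1
  have hF3 : ∀ a ∈ S, pref a (F a) (τ a) := by
    intro a ha; simp only [hF, dif_pos ha]; exact (h' a ha).choose_spec.2.2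
  by_cases hcase : ∀ a ∈ S, F a ∈ Set.range τ
  · -- cycle case
    have hσ : ∀ a : A, ∃ c : A, a ∈ S → (c ∈ S ∧ τ c = F a) := by
      intro a
      by_cases ha : a ∈ S
      · obtain ⟨c, hc⟩ := hcase a ha
        refine ⟨c, fun _ => ⟨?_, hc⟩⟩
        by_contra hcS
        exact hF1 a ha c hcS hc.symm
      · exact ⟨a, fun ha' => absurd ha' ha⟩
    choose σ hσS hστ using hσ
    obtain ⟨a₀, ha₀⟩ := hS
    have horb : ∀ n, σ^[n] a₀ ∈ S := by
      intro n
      induction n with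
      | zero => exact ha₀
      | succ n ih => rw [Function.iterate_succ_apply']; exact hσS _ ih
    obtain ⟨x, y, hxy, hgxy⟩ := Finite.exists_ne_map_eq_of_infinite (fun n : ℕ => σ^[n] a₀)
    wlog hlt : x < y generalizing x y
    · exact this y x hxy.symm hgxy.symm (by omega)
    set c : A := σ^[x] a₀ with hc
    set p : ℕ := y - x with hp
    have hp0 : 0 < p := by omega
    have hcyc : σ^[p] c = c := by
      simp only [hc, hp, ← Function.iterate_add_apply]
      rw [show y - x + x = y by omega]
      exact hgxy.symm
    set C : Set A := Set.range (fun j : ℕ => σ^[j] c) with hC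
    have hcC : c ∈ C := ⟨0, rfl⟩
    have hCS : ∀ a ∈ C, a ∈ S := by
      rintro a ⟨j, rfl⟩
      simp only [hc, ← Function.iterate_add_apply]
      exact horb _
    have hmaps : ∀ a ∈ C, σ a ∈ C := by
      rintro a ⟨j, rfl⟩
      exact ⟨j + 1, by simp only []; rw [Function.iterate_succ_apply']⟩
    have hsurj : ∀ a ∈ C, ∃ a' ∈ C, σ a' = a := by
      rintro a ⟨j, rfl⟩
      refine ⟨σ^[j + p - 1] c, ⟨_, rfl⟩, ?_⟩
      show σ (σ^[j + p - 1] c) = σ^[j] c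
      rw [(Function.iterate_succ_apply' σ (j + p - 1) c).symm,
        show (j + p - 1).succ = j + p by omega, Function.iterate_add_apply, hcyc]
    -- σ injective on C
    have hfin : C.Finite := Set.toFinite C
    have hbij : Set.BijOn σ C C :=
      (hfin.surjOn_iff_bijOn_of_mapsTo hmaps).mp (fun a ha => by
        obtain ⟨a', ha', h⟩ := hsurj a ha; exact ⟨a', ha', h⟩)
    have hinjC := hbij.injOn
    set τ' : A → B := fun a => if a ∈ C then τ (σ a) else τ a with hτ'
    apply hpo C
    refine ⟨⟨c, hcC⟩, τ', ?_, ?_, ?_⟩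
    · intro u v huv
      simp only [hτ'] at huv
      by_cases hu : u ∈ C <;> by_cases hv : v ∈ C <;> simp [hu, hv] at huv
      · exact hinjC hu hv (hinj huv)
      · exact absurd (hinj huv ▸ hmaps u hu) hv
      · exact absurd ((hinj huv).symm ▸ hmaps v hv) hu
      · exact hinj huv
    · intro a ha; simp only [hτ', if_neg ha]
    · intro a ha
      simp only [hτ', if_pos ha]
      rw [hστ a (hCS a ha)]
      exact hF3 a (hCS a ha)
  · -- single-agent case
    push_neg at hcase
    obtain ⟨a, ha, hb⟩ := hcase
    apply hpo {a}
    refine ⟨⟨a, rfl⟩, Function.update τ a (F a), ?_, ?_, ?_⟩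
    · intro u v huv
      by_cases hu : u = a <;> by_cases hv : v = a
      · rw [hu, hv]
      · rw [hu, Function.update_self, Function.update_of_ne hv] at huv
        exact absurd ⟨v, huv.symm⟩ hb
      · rw [hv, Function.update_self, Function.update_of_ne hu] at huv
        exact absurd ⟨u, huv⟩ hb
      · rw [Function.update_of_ne hu, Function.update_of_ne hv] at huv
        exact hinj huv
    · intro x hx
      simp only [Set.mem_singleton_iff] at hx
      rw [Function.update_of_ne hx]
    · intro x hx
      simp only [Set.mem_singleton_iff] at hx
      rw [hx, Function.update_self]
      exact hF3 a ha

open Classical in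
noncomputable def buildList {A B : Type*} [Fintype A] [Fintype B] [DecidableEq A]
    (pref : A → B → B → Prop) (hpref : ∀ a, IsStrictTotalOrder B (pref a))
    (τ : A → B) (hτ : IsPOM pref τ) : ℕ → List A
  | 0 => []
  | n+1 =>
    let l := buildList pref hpref τ hτ n
    if h : ((Finset.univ : Finset A) \ l.toFinset).Nonempty
    then l ++ [(key pref hpref τ hτ _ h).choose]
    else l

lemma buildList_spec {A B : Type*} [Fintype A] [Fintype B] [DecidableEq A]
    (pref : A → B → B → Prop) (hpref : ∀ a, IsStrictTotalOrder B (pref a))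
    (τ : A → B) (hτ : IsPOM pref τ) :
    ∀ n, n ≤ Fintype.card A →
      (buildList pref hpref τ hτ n).Nodup ∧ (buildList pref hpref τ hτ n).length = n := by
  intro n
  induction n with
  | zero => intro _; exact ⟨List.nodup_nil, rfl⟩
  | succ n ih =>
    intro hn
    obtain ⟨hnd, hlen⟩ := ih (le_of_lt hn)
    set l := buildList pref hpref τ hτ n with hl
    have hcard : l.toFinset.card = n := by
      rw [List.toFinset_card_of_nodup hnd, hlen]
    have hne : ((Finset.univ : Finset A) \ l.toFinset).Nonempty := by
      rw [← Finset.card_pos, Finset.card_sdiff_of_subset (Finset.subset_univ _), hcard,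
        Finset.card_univ]
      omega
    have hstep : buildList pref hpref τ hτ (n+1)
        = l ++ [(key pref hpref τ hτ _ hne).choose] := by
      rw [buildList, dif_pos hne]
    set a := (key pref hpref τ hτ _ hne).choose with ha
    have haS := (key pref hpref τ hτ _ hne).choose_spec.1
    have hanotl : a ∉ l := by
      rw [Finset.mem_sdiff] at haS
      intro hmem
      exact haS.2 (List.mem_toFinset.mpr hmem)
    rw [hstep]
    constructor
    · rw [List.nodup_append]
      exact ⟨hnd, List.nodup_singleton a, by
        intro x hx y hy hxy
        rw [List.mem_singleton] at hy
        subst hy; subst hxy; exact hanotl hx⟩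
    · rw [List.length_append, hlen]; rfl

lemma buildList_greedy {A B : Type*} [Fintype A] [Fintype B] [DecidableEq A]
    (pref : A → B → B → Prop) (hpref : ∀ a, IsStrictTotalOrder B (pref a))
    (τ : A → B) (hτ : IsPOM pref τ) :
    ∀ n, n ≤ Fintype.card A →
      ∀ (i : ℕ) (hi : i < (buildList pref hpref τ hτ n).length), ∀ b : B,
        b ≠ τ ((buildList pref hpref τ hτ n).get ⟨i, hi⟩) →
        (∀ (j : ℕ) (hj : j < i), b ≠ τ ((buildList pref hpref τ hτ n).get ⟨j, lt_trans hj hi⟩)) →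
        pref ((buildList pref hpref τ hτ n).get ⟨i, hi⟩)
          (τ ((buildList pref hpref τ hτ n).get ⟨i, hi⟩)) b := by
  intro n
  induction n with
  | zero => intro _ i hi; simp [buildList] at hi
  | succ n ih =>
    intro hn i hi b hb1 hb2
    obtain ⟨hnd, hlen⟩ := buildList_spec pref hpref τ hτ n (le_of_lt hn)
    set l := buildList pref hpref τ hτ n with hl
    have hcard : l.toFinset.card = n := by
      rw [List.toFinset_card_of_nodup hnd, hlen]
    have hne : ((Finset.univ : Finset A) \ l.toFinset).Nonempty := by
      rw [← Finset.card_pos, Finset.card_sdiff_of_subset (Finset.subset_univ _), hcard,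
        Finset.card_univ]
      omega
    have hstep : buildList pref hpref τ hτ (n+1)
        = l ++ [(key pref hpref τ hτ _ hne).choose] := by
      rw [buildList, dif_pos hne]
    set a := (key pref hpref τ hτ _ hne).choose with ha
    have hspec := (key pref hpref τ hτ _ hne).choose_spec.2
    have hget : ∀ (j : ℕ) (hj : j < l.length),
        (buildList pref hpref τ hτ (n+1)).get
          ⟨j, by rw [hstep]; simp; omega⟩ = l.get ⟨j, hj⟩ := by
      intro j hj
      simp only [hstep, List.get_eq_getElem]
      exact List.getElem_append_left hj
    have hi' : i < l.length + 1 := by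
      have := hi; rw [hstep, List.length_append] at this; simpa using this
    rcases lt_or_eq_of_le (Nat.lt_succ_iff.mp hi') with hilt | hieq
    · -- i < l.length : use ih
      have e1 : (buildList pref hpref τ hτ (n+1)).get ⟨i, hi⟩ = l.get ⟨i, hilt⟩ :=
        hget i hilt
      rw [e1] at hb1 ⊢
      refine ih (le_of_lt hn) i hilt b hb1 ?_
      intro j hj
      have := hb2 j hj
      rwa [hget j (lt_trans hj hilt)] at this
    · -- i = l.length : the new element a
      have e1 : (buildList pref hpref τ hτ (n+1)).get ⟨i, hi⟩ = a := by
        simp only [hstep, List.get_eq_getElem]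
        rw [List.getElem_append_right (by omega)]
        simp [hieq, hlen]
      rw [e1] at hb1 ⊢
      apply hspec b _ hb1
      intro a' ha'
      rw [Finset.mem_sdiff] at ha'
      push_neg at ha'
      have hmem : a' ∈ l := List.mem_toFinset.mp (ha' (Finset.mem_univ a'))
      obtain ⟨⟨j, hj⟩, hjv⟩ := List.mem_iff_get.mp hmem
      have := hb2 j (by omega)
      rwa [hget j hj, hjv] at this

/-- every Pareto optimal matching is greedy. -/
theorem stmt3 {A B : Type*} [Fintype A] [Fintype B]
    (pref : A → B → B → Prop) (hpref : ∀ a, IsStrictTotalOrder B (pref a))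
    (τ : A → B) (hτ : IsPOM pref τ) :
    ∃ π : Fin (Fintype.card A) ≃ A, IsGreedy pref π τ := by
  classical
  set m := Fintype.card A with hm
  set l := buildList pref hpref τ hτ m with hl
  obtain ⟨hnd, hlen⟩ := buildList_spec pref hpref τ hτ m le_rfl
  rw [← hl] at hnd hlen
  have hmem : ∀ x : A, x ∈ l := by
    have : l.toFinset = Finset.univ := by
      apply Finset.eq_univ_of_card
      rw [List.toFinset_card_of_nodup hnd, hlen]
    intro x
    rw [← List.mem_toFinset, this]
    exact Finset.mem_univ x
  refine ⟨(finCongr hlen.symm).trans (hnd.getEquivOfForallMemList l hmem), ?_⟩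
  intro i b hb1 hb2
  have hπ : ∀ j : Fin m, ((finCongr hlen.symm).trans
      (hnd.getEquivOfForallMemList l hmem)) j = l.get ⟨j.1, by rw [hlen]; exact j.isLt⟩ := by
    intro j; rfl
  rw [hπ i] at hb1 ⊢
  refine buildList_greedy pref hpref τ hτ m le_rfl i.1 (by rw [← hl, hlen]; exact i.isLt) b hb1 ?_
  intro j hj
  have := hb2 ⟨j, by omega⟩ (by simpa [Fin.lt_def] using hj)
  rwa [hπ ⟨j, by omega⟩] at this
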